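/- Let ψ be an orientation-preserving C² diffeomorphism of ℝ with nonempty fixed point set. Then the centralizer of ψ in the group of orientation-preserving C² diffeomorphisms of ℝ equals the centralizer of ψ². -/

import Mathlib

open Set Filter Function Topology

lemma deriv_nonneg_of_mono {f : ℝ → ℝ} (hd : Differentiable ℝ f) (hm : Monotone f) (x : ℝ) :
    0 ≤ deriv f x := by
  have h := (hd x).hasDerivAt
  rw [hasDerivAt_iff_tendsto_slope] at h
  refine ge_of_tendsto h ?_
  filter_upwards with y
  rw [slope_def_field]
  rcases lt_trichotomy x y with h1 | h1 | h1
  · have h2 := hm h1.le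
    exact div_nonneg (by linarith) (by linarith)
  · simp [h1]
  · have h2 := hm h1.le
    rw [div_nonneg_iff]
    exact Or.inr ⟨by linarith, by linarith⟩

lemma deriv_pos_of_inv {f fi : ℝ → ℝ} (hf : Differentiable ℝ f) (hfi : Differentiable ℝ fi)
    (hm : Monotone f) (hli : ∀ x, fi (f x) = x) (x : ℝ) : 0 < deriv f x := by
  have h1 : deriv (fi ∘ f) x = deriv fi (f x) * deriv f x := deriv_comp x (hfi _) (hf x)
  have h2 : (fi ∘ f) = id := funext hli
  rw [h2, deriv_id] at h1
  rcases (deriv_nonneg_of_mono hf hm x).lt_or_eq with h | h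
  · exact h
  · rw [← h, mul_zero] at h1; norm_num at h1

lemma contDiff_iterate {f : ℝ → ℝ} (hf : ContDiff ℝ 2 f) : ∀ n, ContDiff ℝ 2 f^[n]
  | 0 => contDiff_id
  | n+1 => by rw [Function.iterate_succ]; exact (contDiff_iterate hf n).comp hf

lemma deriv_iterate {f : ℝ → ℝ} (hd : Differentiable ℝ f) : ∀ (n : ℕ) (x : ℝ),
    deriv f^[n] x = ∏ k ∈ Finset.range n, deriv f (f^[k] x)
  | 0, x => by simp
  | n+1, x => by
    rw [Function.iterate_succ', Finset.prod_range_succ]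
    have hdn : Differentiable ℝ f^[n] := Differentiable.iterate hd n
    rw [deriv_comp x (hd _) (hdn x), deriv_iterate hd n x]
    ring

lemma contDiff_one_deriv {f : ℝ → ℝ} (hf : ContDiff ℝ 2 f) : ContDiff ℝ 1 (deriv f) := by
  have h2 : ContDiff ℝ ((1:ℕ) + 1) f := by norm_num at hf ⊢; exact hf
  rw [contDiff_succ_iff_deriv] at h2
  exact h2.2.2

lemma commute_iterate {f u : ℝ → ℝ} (h : ∀ x, f (u x) = u (f x)) :
    ∀ (n : ℕ) (x : ℝ), f^[n] (u x) = u (f^[n] x)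
  | 0, x => rfl
  | n+1, x => by
    rw [Function.iterate_succ_apply', Function.iterate_succ_apply',
      commute_iterate h n x, h]

set_option maxHeartbeats 1000000 in
/-- Kopell's lemma, specialized form. -/
lemma kopell (f fi v vi : ℝ → ℝ)
    (hf2 : ContDiff ℝ 2 f) (hfi2 : ContDiff ℝ 2 fi)
    (hv2 : ContDiff ℝ 2 v) (hvi2 : ContDiff ℝ 2 vi)
    (hfm : StrictMono f) (hvm : StrictMono v)
    (hfl : ∀ x, fi (f x) = x)
    (hvl : ∀ x, vi (v x) = x) (hvr : ∀ x, v (vi x) = x)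
    (hcomm : ∀ x, f (v x) = v (f x))
    (α p : ℝ) (hαp : α < p) (hfα : f α = α) (hvα : v α = α) (hvp : v p = p)
    (hcontr : ∀ y, α < y → y ≤ p → f y < y) :
    ∀ y, α ≤ y → y ≤ p → v y = y := by
  have hfd : Differentiable ℝ f := hf2.differentiable (by norm_num)
  have hfid : Differentiable ℝ fi := hfi2.differentiable (by norm_num)
  have hvd : Differentiable ℝ v := hv2.differentiable (by norm_num)
  have hvid : Differentiable ℝ vi := hvi2.differentiable (by norm_num)
  have hvim : StrictMono vi := by
    intro s t hst
    exact (hvm.lt_iff_lt).1 (by rw [hvr, hvr]; exact hst)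
  have hfd_pos : ∀ x, 0 < deriv f x := deriv_pos_of_inv hfd hfid hfm.monotone hfl
  have hviα : vi α = α := by nth_rewrite 1 [← hvα]; rw [hvl]
  have hvip : vi p = p := by conv_lhs => rw [← hvp, hvl]
  have hvicomm : ∀ x, f (vi x) = vi (f x) := by
    intro x
    have h1 : v (f (vi x)) = f x := by rw [← hcomm, hvr]
    rw [← hvl (f (vi x)), h1]
  -- the sequence a n
  set a : ℕ → ℝ := fun n => f^[n] p with ha
  have ha0 : a 0 = p := rfl
  have haS : ∀ n, a (n+1) = f (a n) := fun n => Function.iterate_succ_apply' f n p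
  have hmem : ∀ n, α < a n ∧ a n ≤ p := by
    intro n
    induction n with
    | zero => exact ⟨hαp, le_refl p⟩
    | succ n ih =>
      refine ⟨?_, ?_⟩
      · rw [haS, ← hfα]; exact hfm ih.1
      · rw [haS]; exact ((hcontr _ ih.1 ih.2).le).trans ih.2
  have hdec : ∀ n, a (n+1) < a n := fun n => by
    rw [haS]; exact hcontr _ (hmem n).1 (hmem n).2
  have hanti : Antitone a := antitone_nat_of_succ_le fun n => (hdec n).le
  have hbddb : BddBelow (Set.range a) := ⟨α, by rintro x ⟨n, rfl⟩; exact (hmem n).1.le⟩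
  have htend0 : Tendsto a atTop (𝓝 (⨅ n, a n)) := tendsto_atTop_ciInf hanti hbddb
  have hinf : (⨅ n, a n) = α := by
    set L := ⨅ n, a n with hL
    have hLα : α ≤ L := le_ciInf fun n => (hmem n).1.le
    have hLp : L ≤ p := (ciInf_le hbddb 0).trans_eq ha0
    have hfL : f L = L := by
      have h1 : Tendsto (fun n => f (a n)) atTop (𝓝 (f L)) :=
        (hfd.continuous.tendsto L).comp htend0
      have h2 : Tendsto (fun n => a (n+1)) atTop (𝓝 L) :=
        htend0.comp (tendsto_add_atTop_nat 1)
      have h3 : (fun n => a (n+1)) = fun n => f (a n) := funext haS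
      rw [h3] at h2
      exact tendsto_nhds_unique h1 h2
    by_contra hne
    have hlt : α < L := hLα.lt_of_ne (Ne.symm hne)
    exact (ne_of_lt (hcontr L hlt hLp)) hfL
  rw [hinf] at htend0
  -- constants
  have hIcc_ne : (Icc α p).Nonempty := ⟨α, le_refl α, hαp.le⟩
  have hderiv_cont : Continuous (deriv f) := (contDiff_one_deriv hf2).continuous
  obtain ⟨z₀, hz₀mem, hz₀min⟩ := isCompact_Icc.exists_isMinOn hIcc_ne hderiv_cont.continuousOn
  set ε := deriv f z₀ with hεdef
  have hε : 0 < ε := hfd_pos z₀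
  have hεle : ∀ x ∈ Icc α p, ε ≤ deriv f x := fun x hx => isMinOn_iff.1 hz₀min x hx
  have hpair := contDiff_one_iff_deriv.1 (contDiff_one_deriv hf2)
  obtain ⟨M, hM⟩ := isCompact_Icc.exists_bound_of_continuousOn
    (s := Icc α p) hpair.2.continuousOn
  have hM0 : 0 ≤ M := le_trans (norm_nonneg _) (hM α ⟨le_refl α, hαp.le⟩)
  have hlip : ∀ x ∈ Icc α p, ∀ y ∈ Icc α p, |deriv f y - deriv f x| ≤ M * |y - x| := by
    intro x hx y hy
    have h := Convex.norm_image_sub_le_of_norm_deriv_le (f := deriv f) (s := Icc α p)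
      (fun z _ => (hpair.1 z)) hM (convex_Icc _ _) hx hy
    simpa [Real.norm_eq_abs] using h
  set C := M / ε with hCdef
  have hC : 0 ≤ C := div_nonneg hM0 hε.le
  set K := Real.exp (C * (p - α)) with hKdef
  have hK1 : 1 ≤ K := Real.one_le_exp (mul_nonneg hC (by linarith))
  have hK0 : 0 < K := lt_of_lt_of_le one_pos hK1
  -- membership facts
  have haIcc : ∀ n, a n ∈ Icc α p := fun n => ⟨(hmem n).1.le, (hmem n).2⟩
  have hiter_a : ∀ k j, f^[k] (a j) = a (k + j) := by
    intro k j; rw [ha]; exact (Function.iterate_add_apply f k j p).symm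
  have hiter_mem : ∀ j (x : ℝ), a (j+1) ≤ x → x ≤ a j → ∀ k,
      a (k+j+1) ≤ f^[k] x ∧ f^[k] x ≤ a (k+j) := by
    intro j x h1 h2 k
    constructor
    · have h3 := (hfm.iterate k).monotone h1
      rw [hiter_a] at h3
      have : k + (j + 1) = k + j + 1 := by ring
      rw [this] at h3; exact h3
    · have h3 := (hfm.iterate k).monotone h2
      rw [hiter_a] at h3; exact h3
  -- distortion estimate
  have hratio : ∀ j (x y : ℝ), a (j+1) ≤ x → x ≤ a j → a (j+1) ≤ y → y ≤ a j → ∀ n : ℕ,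
      deriv f^[n] x ≤ K * deriv f^[n] y := by
    intro j x y hx1 hx2 hy1 hy2 n
    rw [deriv_iterate hfd, deriv_iterate hfd]
    have hterm : ∀ k ∈ Finset.range n,
        deriv f (f^[k] x) ≤ Real.exp (C * (a (k+j) - a (k+j+1))) * deriv f (f^[k] y) := by
      intro k _
      obtain ⟨hkx1, hkx2⟩ := hiter_mem j x hx1 hx2 k
      obtain ⟨hky1, hky2⟩ := hiter_mem j y hy1 hy2 k
      have hxm : f^[k] x ∈ Icc α p := ⟨(hmem (k+j+1)).1.le.trans hkx1, hkx2.trans (hmem (k+j)).2⟩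
      have hym : f^[k] y ∈ Icc α p := ⟨(hmem (k+j+1)).1.le.trans hky1, hky2.trans (hmem (k+j)).2⟩
      have hd : |f^[k] x - f^[k] y| ≤ a (k+j) - a (k+j+1) := by
        rw [abs_le]; constructor <;> [linarith; linarith]
      have h1 : deriv f (f^[k] x) ≤ deriv f (f^[k] y) + M * |f^[k] x - f^[k] y| := by
        have := hlip _ hym _ hxm
        have h2 := le_of_abs_le this
        linarith [h2]
      have h2 : M * |f^[k] x - f^[k] y| ≤ deriv f (f^[k] y) * (C * |f^[k] x - f^[k] y|) := by
        have h3 : ε ≤ deriv f (f^[k] y) := hεle _ hym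
        have h4 : (0:ℝ) ≤ |f^[k] x - f^[k] y| := abs_nonneg _
        have h5 : deriv f (f^[k] y) * (C * |f^[k] x - f^[k] y|) =
            (M * |f^[k] x - f^[k] y|) * (deriv f (f^[k] y) / ε) := by
          rw [hCdef]; field_simp
        rw [h5]
        exact le_mul_of_one_le_right (mul_nonneg hM0 h4) ((one_le_div hε).2 h3)
      have h3 : deriv f (f^[k] x) ≤ deriv f (f^[k] y) * (1 + C * |f^[k] x - f^[k] y|) := by
        nlinarith [h1, h2]
      have h4 : 1 + C * |f^[k] x - f^[k] y| ≤ Real.exp (C * (a (k+j) - a (k+j+1))) := by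
        calc 1 + C * |f^[k] x - f^[k] y| ≤ 1 + C * (a (k+j) - a (k+j+1)) := by nlinarith [hd, hC]
          _ ≤ Real.exp (C * (a (k+j) - a (k+j+1))) := by
              have := Real.add_one_le_exp (C * (a (k+j) - a (k+j+1))); linarith
      calc deriv f (f^[k] x) ≤ deriv f (f^[k] y) * (1 + C * |f^[k] x - f^[k] y|) := h3
        _ ≤ deriv f (f^[k] y) * Real.exp (C * (a (k+j) - a (k+j+1))) := by
            have := (hfd_pos (f^[k] y)).le
            nlinarith [h4]
        _ = Real.exp (C * (a (k+j) - a (k+j+1))) * deriv f (f^[k] y) := mul_comm _ _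
    calc ∏ k ∈ Finset.range n, deriv f (f^[k] x)
        ≤ ∏ k ∈ Finset.range n, (Real.exp (C * (a (k+j) - a (k+j+1))) * deriv f (f^[k] y)) :=
          Finset.prod_le_prod (fun k _ => (hfd_pos _).le) hterm
      _ = (∏ k ∈ Finset.range n, Real.exp (C * (a (k+j) - a (k+j+1)))) *
          ∏ k ∈ Finset.range n, deriv f (f^[k] y) := Finset.prod_mul_distrib
      _ ≤ K * ∏ k ∈ Finset.range n, deriv f (f^[k] y) := by
          have hprod : (∏ k ∈ Finset.range n, Real.exp (C * (a (k+j) - a (k+j+1)))) =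
              Real.exp (∑ k ∈ Finset.range n, C * (a (k+j) - a (k+j+1))) := (Real.exp_sum _ _).symm
          rw [hprod]
          have hsum : (∑ k ∈ Finset.range n, C * (a (k+j) - a (k+j+1))) = C * (a j - a (n+j)) := by
            rw [← Finset.mul_sum]
            congr 1
            have h7 := Finset.sum_range_sub' (fun k => a (k+j)) n
            simp only [zero_add] at h7
            rw [← h7]
            refine Finset.sum_congr rfl fun k _ => ?_
            have h8 : k + j + 1 = k + 1 + j := by omega
            rw [h8]
          rw [hsum]
          have hle : C * (a j - a (n+j)) ≤ C * (p - α) := by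
            have h1 := (hmem j).2
            have h2 := (hmem (n+j)).1
            nlinarith [hC]
          have := Real.exp_le_exp.2 hle
          have hpos : (0:ℝ) ≤ ∏ k ∈ Finset.range n, deriv f (f^[k] y) :=
            Finset.prod_nonneg fun k _ => (hfd_pos _).le
          rw [hKdef]
          nlinarith [this, hpos]
  -- derivative bound for commuting maps
  have bound : ∀ u : ℝ → ℝ, Differentiable ℝ u → Continuous (deriv u) → Monotone u →
      (∀ x, f (u x) = u (f x)) → u p = p → ∀ y, α < y → y ≤ p → deriv u y ≤ K := by
    intro u hud hudc hum hucomm hup y hy1 hy2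
    have hua : ∀ n, u (a n) = a n := by
      intro n
      have := commute_iterate hucomm n p
      rw [hup] at this
      exact this.symm
    have huα : u α = α := by
      have h1 : Tendsto (fun n => u (a n)) atTop (𝓝 (u α)) := (hud.continuous.tendsto α).comp htend0
      have h2 : (fun n => u (a n)) = a := funext hua
      rw [h2] at h1
      exact tendsto_nhds_unique h1 htend0
    have hu'α : deriv u α = 1 := by
      have h := (hud α).hasDerivAt
      rw [hasDerivAt_iff_tendsto_slope] at h
      have hseq : Tendsto a atTop (𝓝[≠] α) := by
        rw [tendsto_nhdsWithin_iff]
        exact ⟨htend0, Eventually.of_forall fun n => ne_of_gt (hmem n).1⟩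
      have h2 := h.comp hseq
      have heq : (fun n => slope u α (a n)) = fun _ => (1:ℝ) := by
        funext n
        rw [slope_def_field, hua, huα]
        field_simp [sub_ne_zero.2 (ne_of_gt (hmem n).1)]
      rw [show ((slope u α) ∘ a) = fun n => slope u α (a n) from rfl, heq] at h2
      exact tendsto_nhds_unique h2 tendsto_const_nhds
    -- find fundamental domain
    have hexists : ∃ n, a n < y := by
      by_contra hcon
      push_neg at hcon
      have : y ≤ α := ge_of_tendsto htend0 (Eventually.of_forall hcon)
      linarith
    have hn₀ := Nat.find_spec hexists
    have hn₀pos : Nat.find hexists ≠ 0 := by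
      intro h0
      rw [h0] at hn₀
      rw [ha0] at hn₀
      linarith
    obtain ⟨j, hj⟩ := Nat.exists_eq_succ_of_ne_zero hn₀pos
    have h1 : a (j+1) < y := by rw [← Nat.succ_eq_add_one, ← hj]; exact hn₀
    have h2 : y ≤ a j := not_lt.1 (Nat.find_min hexists (by omega))
    have hu1 : a (j+1) ≤ u y := by
      rw [← hua (j+1)]; exact hum h1.le
    have hu2 : u y ≤ a j := by
      rw [← hua j]; exact hum h2
    -- chain rule identity and bound
    have hbnd : ∀ n : ℕ, deriv u y ≤ deriv u (f^[n] y) * K := by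
      intro n
      have hiden : deriv u (f^[n] y) * deriv f^[n] y = deriv f^[n] (u y) * deriv u y := by
        have hfn : (u ∘ f^[n]) = (f^[n] ∘ u) := by
          funext x; exact (commute_iterate hucomm n x).symm
        have e1 : deriv (u ∘ f^[n]) y = deriv u (f^[n] y) * deriv f^[n] y :=
          deriv_comp y (hud _) ((hfd.iterate n) y)
        have e2 : deriv (f^[n] ∘ u) y = deriv f^[n] (u y) * deriv u y :=
          deriv_comp y ((hfd.iterate n) _) (hud y)
        rw [← e1, ← e2, hfn]
      have hr : deriv f^[n] y ≤ K * deriv f^[n] (u y) := hratio j y (u y) h1.le h2 hu1 hu2 n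
      have hpos1 : 0 < deriv f^[n] (u y) := by
        rw [deriv_iterate hfd]
        exact Finset.prod_pos fun k _ => hfd_pos _
      have hpos2 : 0 ≤ deriv u (f^[n] y) := deriv_nonneg_of_mono hud hum _
      -- deriv u y = deriv u (f^[n] y) * deriv f^[n] y / deriv f^[n] (u y)
      rw [← mul_le_mul_iff_of_pos_right hpos1]
      calc deriv u y * deriv f^[n] (u y) = deriv u (f^[n] y) * deriv f^[n] y := by
            rw [hiden]; ring
        _ ≤ deriv u (f^[n] y) * (K * deriv f^[n] (u y)) := by nlinarith [hr, hpos2]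
        _ = deriv u (f^[n] y) * K * deriv f^[n] (u y) := by ring
    -- pass to the limit
    have htendfy : Tendsto (fun n => f^[n] y) atTop (𝓝 α) := by
      have hup' : ∀ n, f^[n] y ≤ a (n + j) := by
        intro n
        have := (hfm.iterate n).monotone h2
        rw [hiter_a] at this; exact this
      have hlo : ∀ n, α < f^[n] y := by
        intro n
        have := (hfm.iterate n).monotone h1.le
        rw [hiter_a] at this
        calc α < a (n + (j+1)) := (hmem _).1
          _ ≤ f^[n] y := this
      have htup : Tendsto (fun n => a (n + j)) atTop (𝓝 α) := by
        have : Tendsto (fun n : ℕ => n + j) atTop atTop := tendsto_add_atTop_nat j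
        exact htend0.comp this
      exact tendsto_of_tendsto_of_tendsto_of_le_of_le tendsto_const_nhds htup
        (fun n => (hlo n).le) hup'
    have hlim : Tendsto (fun n => deriv u (f^[n] y) * K) atTop (𝓝 K) := by
      have h3 : Tendsto (fun n => deriv u (f^[n] y)) atTop (𝓝 (deriv u α)) :=
        (hudc.tendsto α).comp htendfy
      rw [hu'α] at h3
      have := h3.mul_const K
      simpa using this
    exact ge_of_tendsto hlim (Eventually.of_forall hbnd)
  -- the final contradiction machine
  have final : ∀ w : ℝ → ℝ, Continuous w → StrictMono w → w α = α → w p = p →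
      (∀ m : ℕ, Differentiable ℝ w^[m]) →
      (∀ (m : ℕ) y, α < y → y ≤ p → deriv w^[m] y ≤ K) →
      ∀ x₀, α < x₀ → x₀ < p → ¬ (x₀ < w x₀) := by
    intro w hwc hwm hwα hwp hwdiff hbound x₀ hx₀1 hx₀2 hwx
    set S := {y | y ∈ Icc α x₀ ∧ w y = y} with hS
    have hSne : S.Nonempty := ⟨α, ⟨le_refl α, hx₀1.le⟩, hwα⟩
    have hSclosed : IsClosed S := by
      have hSeq : S = Icc α x₀ ∩ {y | w y = y} := rfl
      rw [hSeq]
      exact isClosed_Icc.inter (isClosed_eq hwc continuous_id)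
    have hSbdd : BddAbove S := ⟨x₀, fun y hy => hy.1.2⟩
    set c := sSup S with hc
    have hcS : c ∈ S := hSclosed.csSup_mem hSne hSbdd
    have hc1 : α ≤ c := hcS.1.1
    have hc2 : c ≤ x₀ := hcS.1.2
    have hcw : w c = c := hcS.2
    have hcx₀ : c < x₀ := by
      rcases hc2.lt_or_eq with h | h
      · exact h
      · exfalso; rw [h] at hcw; exact (ne_of_gt hwx) hcw
    have hnofix : ∀ y, c < y → y ≤ x₀ → w y ≠ y := by
      intro y hy1 hy2 hy3
      have : y ∈ S := ⟨⟨hc1.trans hy1.le, hy2⟩, hy3⟩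
      exact absurd (le_csSup hSbdd this) (not_le.2 hy1)
    have hsign : ∀ y, c < y → y ≤ x₀ → y < w y := by
      intro y hy1 hy2
      rcases lt_trichotomy y (w y) with h | h | h
      · exact h
      · exact absurd h.symm (hnofix y hy1 hy2)
      · exfalso
        rcases hy2.lt_or_eq with h4 | h4
        · have hcont : ContinuousOn (fun t => w t - t) (Icc y x₀) :=
            (hwc.sub continuous_id).continuousOn
          have hmem0 : (0:ℝ) ∈ Ioo (w y - y) (w x₀ - x₀) := ⟨by linarith, by linarith⟩
          obtain ⟨z, hz1, hz2⟩ := intermediate_value_Ioo h4.le hcont hmem0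
          refine hnofix z (hy1.trans hz1.1) hz1.2.le ?_
          have hz3 : w z - z = 0 := hz2
          linarith
        · rw [h4] at h; exact absurd hwx (not_lt.2 h.le)
    set z := c + (x₀ - c) / (2 * (K + 1)) with hz
    have hden : (0:ℝ) < 2 * (K + 1) := by linarith
    have hz1 : c < z := by
      rw [hz]
      have : 0 < (x₀ - c) / (2 * (K + 1)) := div_pos (by linarith) hden
      linarith
    have hz2 : z < x₀ := by
      rw [hz]
      have h5 : (x₀ - c) / (2 * (K + 1)) < (x₀ - c) := by
        rw [div_lt_iff₀ hden]
        nlinarith [hcx₀, hK1]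
      linarith
    have hstay : ∀ m : ℕ, c < w^[m] z ∧ w^[m] z ≤ p := by
      intro m
      induction m with
      | zero => refine ⟨?_, ?_⟩ <;> simp only [Function.iterate_zero_apply] <;> linarith
      | succ m ih =>
        rw [Function.iterate_succ_apply']
        constructor
        · calc c = w c := hcw.symm
            _ < w (w^[m] z) := hwm ih.1
        · calc w (w^[m] z) ≤ w p := hwm.monotone ih.2
            _ = p := hwp
    have hgrow : ∃ m : ℕ, x₀ < w^[m] z := by
      by_contra hcon
      push_neg at hcon
      have hmono : Monotone (fun m : ℕ => w^[m] z) := by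
        apply monotone_nat_of_le_succ
        intro m
        rw [Function.iterate_succ_apply']
        exact (hsign _ (hstay m).1 (hcon m)).le
      have hbdd2 : BddAbove (Set.range fun m : ℕ => w^[m] z) :=
        ⟨x₀, by rintro t ⟨m, rfl⟩; exact hcon m⟩
      set L := ⨆ m : ℕ, w^[m] z with hLdef
      have htL : Tendsto (fun m : ℕ => w^[m] z) atTop (𝓝 L) := tendsto_atTop_ciSup hmono hbdd2
      have hwL : w L = L := by
        have h1 : Tendsto (fun m : ℕ => w (w^[m] z)) atTop (𝓝 (w L)) := (hwc.tendsto L).comp htL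
        have h2 : (fun m : ℕ => w (w^[m] z)) = fun m => w^[m+1] z := by
          funext m; rw [Function.iterate_succ_apply']
        have h3 : Tendsto (fun m : ℕ => w^[m+1] z) atTop (𝓝 L) := htL.comp (tendsto_add_atTop_nat 1)
        rw [h2] at h1
        exact tendsto_nhds_unique h1 h3
      have hL1 : c < L := lt_of_lt_of_le hz1 (le_ciSup hbdd2 0)
      have hL2 : L ≤ x₀ := ciSup_le hcon
      exact hnofix L hL1 hL2 hwL
    obtain ⟨m, hm⟩ := hgrow
    obtain ⟨ξ, hξ, hslope⟩ := exists_hasDerivAt_eq_slope w^[m] (deriv w^[m]) hz1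
      ((hwdiff m).continuous.continuousOn) (fun t _ => ((hwdiff m) t).hasDerivAt)
    have hwmc : w^[m] c = c := Function.iterate_fixed hcw m
    have hbig : K < deriv w^[m] ξ := by
      rw [hslope, hwmc]
      rw [lt_div_iff₀ (by linarith)]
      have hzc : (z - c) * (2 * (K + 1)) = x₀ - c := by
        rw [hz]; field_simp; ring
      nlinarith [hm, hzc, mul_pos (show (0:ℝ) < K + 2 by linarith)
        (show (0:ℝ) < z - c by linarith)]
    have hsmall : deriv w^[m] ξ ≤ K :=
      hbound m ξ (lt_of_le_of_lt hc1 hξ.1) (by linarith [hξ.2, hz2, hx₀2])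
    linarith
  -- apply everything
  intro y₀ hy₀1 hy₀2
  by_contra hne
  have hy₀1' : α < y₀ := hy₀1.lt_of_ne (by rintro rfl; exact hne hvα)
  have hy₀2' : y₀ < p := hy₀2.lt_of_ne (by rintro rfl; exact hne hvp)
  -- iterate facts for v and vi
  have hvit : ∀ m : ℕ, Differentiable ℝ v^[m] := fun m => hvd.iterate m
  have hviit : ∀ m : ℕ, Differentiable ℝ vi^[m] := fun m => hvid.iterate m
  have hv_bound : ∀ (m : ℕ) y, α < y → y ≤ p → deriv v^[m] y ≤ K := by
    intro m
    apply bound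
    · exact hvd.iterate m
    · exact (contDiff_one_deriv (contDiff_iterate hv2 m)).continuous
    · exact (hvm.iterate m).monotone
    · intro x; exact (commute_iterate (fun t => (hcomm t).symm) m x).symm
    · exact Function.iterate_fixed hvp m
  have hvi_bound : ∀ (m : ℕ) y, α < y → y ≤ p → deriv vi^[m] y ≤ K := by
    intro m
    apply bound
    · exact hvid.iterate m
    · exact (contDiff_one_deriv (contDiff_iterate hvi2 m)).continuous
    · exact (hvim.iterate m).monotone
    · intro x; exact (commute_iterate (fun t => (hvicomm t).symm) m x).symm
    · exact Function.iterate_fixed hvip m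
  rcases lt_trichotomy y₀ (v y₀) with h | h | h
  · exact final v hvd.continuous hvm hvα hvp hvit hv_bound y₀ hy₀1' hy₀2' h
  · exact hne h.symm
  · have h2 : y₀ < vi y₀ := by
      have h3 := hvim h
      rw [hvl] at h3
      exact h3
    exact final vi hvid.continuous hvim hviα hvip hviit hvi_bound y₀ hy₀1' hy₀2' h2

lemma fix_sq {f : ℝ → ℝ} (hfm : StrictMono f) {y : ℝ} (h : f (f y) = y) : f y = y := by
  rcases lt_trichotomy (f y) y with h1 | h1 | h1
  · have h2 := hfm h1
    rw [h] at h2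
    linarith
  · exact h1
  · have h2 := hfm h1
    rw [h] at h2
    linarith

set_option maxHeartbeats 1000000 in
lemma interval_lemma (f fi v vi : ℝ → ℝ)
    (hf2 : ContDiff ℝ 2 f) (hfi2 : ContDiff ℝ 2 fi)
    (hv2 : ContDiff ℝ 2 v) (hvi2 : ContDiff ℝ 2 vi)
    (hfm : StrictMono f) (hvm : StrictMono v)
    (hfl : ∀ t, fi (f t) = t) (hfr : ∀ t, f (fi t) = t)
    (hvl : ∀ t, vi (v t) = t) (hvr : ∀ t, v (vi t) = t)
    (hcommv : ∀ y, f (f (v y)) = v (f (f y)))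
    (hconj : ∀ y, f (v (fi y)) = vi y)
    (I : Set ℝ) (α : ℝ)
    (hIlb : ∀ y ∈ I, α < y)
    (hIoc : ∀ y ∈ I, ∀ z, α < z → z ≤ y → z ∈ I)
    (hmapsfi : ∀ y ∈ I, fi y ∈ I)
    (hmapsvi : ∀ y ∈ I, vi y ∈ I)
    (hnofix : ∀ y ∈ I, f (f y) ≠ y)
    (hfα : f α = α) (hvα : v α = α) :
    ∀ x ∈ I, v x = x := by
  intro x hxI
  have hfim : StrictMono fi := fun s t hst => (hfm.lt_iff_lt).1 (by rw [hfr, hfr]; exact hst)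
  have hvim : StrictMono vi := fun s t hst => (hvm.lt_iff_lt).1 (by rw [hvr, hvr]; exact hst)
  have hfiα : fi α = α := by nth_rewrite 1 [← hfα]; rw [hfl]
  have hviα : vi α = α := by nth_rewrite 1 [← hvα]; rw [hvl]
  have hfc : Continuous f := hf2.continuous
  have hvc : Continuous v := hv2.continuous
  have hfic : Continuous fi := hfi2.continuous
  have hh2 : ContDiff ℝ 2 (fun y => f (f y)) := hf2.comp hf2
  have hhi2 : ContDiff ℝ 2 (fun y => fi (fi y)) := hfi2.comp hfi2
  have hhm : StrictMono (fun y => f (f y)) := fun s t hst => hfm (hfm hst)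
  have hhim : StrictMono (fun y => fi (fi y)) := fun s t hst => hfim (hfim hst)
  have hhl : ∀ t, fi (fi (f (f t))) = t := fun t => by rw [hfl, hfl]
  have hhr : ∀ t, f (f (fi (fi t))) = t := fun t => by rw [hfr, hfr]
  have hhα : f (f α) = α := by rw [hfα, hfα]
  have hhiα : fi (fi α) = α := by rw [hfiα, hfiα]
  -- IVT helpers
  have ivt1 : ∀ g : ℝ → ℝ, Continuous g → ∀ s t, s ∈ I → t ∈ I → s < t →
      g s < s → t < g t → ∃ z ∈ I, g z = z := by
    intro g hgc s t hsI htI hst h1 h2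
    obtain ⟨z, hz1, hz2⟩ := intermediate_value_Ioo hst.le
      ((hgc.sub continuous_id).continuousOn)
      (show (0:ℝ) ∈ Ioo (g s - s) (g t - t) from ⟨by linarith, by linarith⟩)
    have hz3 : g z - z = 0 := hz2
    exact ⟨z, hIoc t htI z ((hIlb s hsI).trans hz1.1) hz1.2.le, by linarith⟩
  have ivt2 : ∀ g : ℝ → ℝ, Continuous g → ∀ s t, s ∈ I → t ∈ I → s < t →
      s < g s → g t < t → ∃ z ∈ I, g z = z := by
    intro g hgc s t hsI htI hst h1 h2
    obtain ⟨z, hz1, hz2⟩ := intermediate_value_Ioo' hst.le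
      ((hgc.sub continuous_id).continuousOn)
      (show (0:ℝ) ∈ Ioo (g t - t) (g s - s) from ⟨by linarith, by linarith⟩)
    have hz3 : g z - z = 0 := hz2
    exact ⟨z, hIoc t htI z ((hIlb s hsI).trans hz1.1) hz1.2.le, by linarith⟩
  have dichot : ∀ g : ℝ → ℝ, Continuous g → (∀ y ∈ I, g y ≠ y) →
      (∀ y ∈ I, g y < y) ∨ (∀ y ∈ I, y < g y) := by
    intro g hgc hgne
    rcases lt_or_gt_of_ne (hgne x hxI) with h1 | h1
    · left
      intro y hyI
      rcases lt_trichotomy (g y) y with h2 | h2 | h2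
      · exact h2
      · exact absurd h2 (hgne y hyI)
      · exfalso
        rcases lt_trichotomy x y with h3 | h3 | h3
        · obtain ⟨z, hzI, hz⟩ := ivt1 g hgc x y hxI hyI h3 (by linarith) (by linarith)
          exact hgne z hzI hz
        · rw [h3] at h1; linarith
        · obtain ⟨z, hzI, hz⟩ := ivt2 g hgc y x hyI hxI h3 (by linarith) (by linarith)
          exact hgne z hzI hz
    · right
      intro y hyI
      rcases lt_trichotomy y (g y) with h2 | h2 | h2
      · exact h2
      · exact absurd h2.symm (hgne y hyI)
      · exfalso
        rcases lt_trichotomy x y with h3 | h3 | h3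
        · obtain ⟨z, hzI, hz⟩ := ivt2 g hgc x y hxI hyI h3 (by linarith) (by linarith)
          exact hgne z hzI hz
        · rw [h3] at h1; linarith
        · obtain ⟨z, hzI, hz⟩ := ivt1 g hgc y x hyI hxI h3 (by linarith) (by linarith)
          exact hgne z hzI hz
  -- existence of a fixed point of v in I
  have hsignv : ∃ p ∈ I, v p = p := by
    by_contra hnp
    push_neg at hnp
    rcases dichot v hvc hnp with hneg | hpos
    · have h1 : x < vi x := by
        have h2 := hnp (vi x) (hmapsvi x hxI)
        have h3 : v (vi x) < vi x ∨ vi x < v (vi x) := by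
          rcases dichot v hvc hnp with hc | hc
          · exact Or.inl (hc _ (hmapsvi x hxI))
          · exact Or.inr (hc _ (hmapsvi x hxI))
        rcases h3 with h4 | h4 <;> rw [hvr] at h4
        · exact h4
        · exfalso
          have h5 := hneg (vi x) (hmapsvi x hxI)
          rw [hvr] at h5
          linarith
      have h6 := hneg (fi x) (hmapsfi x hxI)
      have h7 := hfm h6
      rw [hconj, hfr] at h7
      linarith
    · have h1 : vi x < x := by
        have h5 := hpos (vi x) (hmapsvi x hxI)
        rw [hvr] at h5
        exact h5
      have h6 := hpos (fi x) (hmapsfi x hxI)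
      have h7 := hfm h6
      rw [hconj, hfr] at h7
      linarith
  obtain ⟨p, hpI, hvp⟩ := hsignv
  have hαp : α < p := hIlb p hpI
  -- extension mechanism
  have ext : ∀ g : ℝ → ℝ, Continuous g → StrictMono g → (∀ y ∈ I, g y ∈ I) →
      (∀ y ∈ I, g y < y) → (∀ y, g (v y) = v (g y)) →
      (∀ y, α ≤ y → y ≤ p → v y = y) → v x = x := by
    intro g hgc hgm hgmaps hglt hgcomm hid
    set b : ℕ → ℝ := fun n => g^[n] x with hbdef
    have hbI : ∀ n, b n ∈ I := by
      intro n
      induction n with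
      | zero => exact hxI
      | succ n ih =>
        simp only [hbdef, Function.iterate_succ_apply']
        exact hgmaps _ ih
    have hbdec : Antitone b := antitone_nat_of_succ_le fun n => by
      simp only [hbdef, Function.iterate_succ_apply']
      exact (hglt _ (hbI n)).le
    have hbα : ∀ n, α < b n := fun n => hIlb _ (hbI n)
    have hbbdd : BddBelow (Set.range b) := ⟨α, by rintro t ⟨n, rfl⟩; exact (hbα n).le⟩
    have htb : Tendsto b atTop (𝓝 (⨅ n, b n)) := tendsto_atTop_ciInf hbdec hbbdd
    have hLfix : g (⨅ n, b n) = (⨅ n, b n) := by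
      have h1 : Tendsto (fun n => g (b n)) atTop (𝓝 (g (⨅ n, b n))) := (hgc.tendsto _).comp htb
      have h2 : (fun n => g (b n)) = fun n => b (n+1) := by
        funext n; simp only [hbdef, Function.iterate_succ_apply']
      rw [h2] at h1
      exact tendsto_nhds_unique h1 (htb.comp (tendsto_add_atTop_nat 1))
    have hLα : (⨅ n, b n) = α := by
      have hLge : α ≤ ⨅ n, b n := le_ciInf fun n => (hbα n).le
      rcases hLge.lt_or_eq with h1 | h1
      · exfalso
        have hLx : (⨅ n, b n) ≤ x := ciInf_le hbbdd 0
        have hLI : (⨅ n, b n) ∈ I := hIoc x hxI _ h1 hLx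
        exact (ne_of_lt (hglt _ hLI)) hLfix
      · exact h1.symm
    rw [hLα] at htb
    have hev : ∃ n, b n < p := (htb.eventually_lt_const hαp).exists
    obtain ⟨n, hn⟩ := hev
    have h5 : v (b n) = b n := hid _ (hbα n).le hn.le
    have h6 : g^[n] (v x) = g^[n] x := by
      rw [commute_iterate hgcomm n x]
      exact h5
    exact (hgm.iterate n).injective h6
  -- case analysis on the sign of f ∘ f - id on I
  rcases dichot (fun y => f (f y)) (hfc.comp hfc) hnofix with hcase | hcase
  · have hcontr : ∀ y, α < y → y ≤ p → f (f y) < y := fun y h1 h2 =>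
      hcase y (hIoc p hpI y h1 h2)
    have hk := kopell (fun y => f (f y)) (fun y => fi (fi y)) v vi hh2 hhi2 hv2 hvi2
      hhm hvm hhl hvl hvr hcommv α p hαp hhα hvα hvp hcontr
    exact ext (fun y => f (f y)) (hfc.comp hfc) hhm
      (fun y hyI => hIoc y hyI _ (by
        have h2 : f (f α) < f (f y) := hfm (hfm (hIlb y hyI))
        rw [hhα] at h2
        exact h2) (le_of_lt (hcase y hyI)))
      hcase hcommv hk
  · have hhi_lt : ∀ y ∈ I, fi (fi y) < y := by
      intro y hyI
      have h3 := hcase (fi (fi y)) (hmapsfi _ (hmapsfi _ hyI))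
      rw [hhr] at h3
      exact h3
    have hcontr : ∀ y, α < y → y ≤ p → fi (fi y) < y := fun y h1 h2 =>
      hhi_lt y (hIoc p hpI y h1 h2)
    have hcommvi : ∀ y, fi (fi (v y)) = v (fi (fi y)) := by
      intro y
      have h1 := hcommv (fi (fi y))
      rw [hhr] at h1
      have h2 : fi (fi (f (f (v (fi (fi y)))))) = fi (fi (v y)) := by rw [h1]
      rw [hhl] at h2
      exact h2.symm
    have hk := kopell (fun y => fi (fi y)) (fun y => f (f y)) v vi hhi2 hh2 hv2 hvi2
      hhim hvm hhr hvl hvr hcommvi α p hαp hhiα hvα hvp hcontr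
    exact ext (fun y => fi (fi y)) (hfic.comp hfic) hhim
      (fun y hyI => hmapsfi _ (hmapsfi _ hyI))
      hhi_lt hcommvi hk

set_option maxHeartbeats 1000000 in
lemma core (f fi φ φi : ℝ → ℝ)
    (hf2 : ContDiff ℝ 2 f) (hfi2 : ContDiff ℝ 2 fi)
    (hφ2 : ContDiff ℝ 2 φ) (hφi2 : ContDiff ℝ 2 φi)
    (hfm : StrictMono f) (hφm : StrictMono φ)
    (hfl : ∀ x, fi (f x) = x) (hfr : ∀ x, f (fi x) = x)
    (hφl : ∀ x, φi (φ x) = x) (hφr : ∀ x, φ (φi x) = x)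
    (H : ∀ x, φ (f (f x)) = f (f (φ x)))
    (x : ℝ) (hx : f (f x) ≠ x) (hex : ∃ y, y < x ∧ f (f y) = y) :
    φ (f (φi (fi x))) = x := by
  have hfim : StrictMono fi := fun s t hst => (hfm.lt_iff_lt).1 (by rw [hfr, hfr]; exact hst)
  have hφim : StrictMono φi := fun s t hst => (hφm.lt_iff_lt).1 (by rw [hφr, hφr]; exact hst)
  have Hi : ∀ y, φi (f (f y)) = f (f (φi y)) := by
    intro y
    have h1 := H (φi y)
    rw [hφr] at h1
    rw [← h1, hφl]
  have hfixf : ∀ y, f (f y) = y → f y = y := fun y h => fix_sq hfm h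
  have hfixfi : ∀ y, f (f y) = y → fi y = y := by
    intro y h
    have h2 := hfixf y h
    nth_rewrite 1 [← h2]
    rw [hfl]
  have hFφ : ∀ y, f (f y) = y → f (f (φ y)) = φ y := fun y h => by rw [← H, h]
  have hFφi : ∀ y, f (f y) = y → f (f (φi y)) = φi y := fun y h => by rw [← Hi, h]
  -- the commuting root v and its inverse
  set v : ℝ → ℝ := fun t => φ (f (φi (fi t))) with hvdef
  set vi : ℝ → ℝ := fun t => f (φ (fi (φi t))) with hvidef
  have hvl : ∀ t, vi (v t) = t := by
    intro t
    simp only [hvdef, hvidef]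
    rw [hφl, hfl, hφr, hfr]
  have hvr : ∀ t, v (vi t) = t := by
    intro t
    simp only [hvdef, hvidef]
    rw [hfl, hφl, hfr, hφr]
  have hv2 : ContDiff ℝ 2 v := hφ2.comp (hf2.comp (hφi2.comp hfi2))
  have hvi2 : ContDiff ℝ 2 vi := hf2.comp (hφ2.comp (hfi2.comp hφi2))
  have hvm : StrictMono v := fun s t hst => hφm (hfm (hφim (hfim hst)))
  have hvim : StrictMono vi := fun s t hst => hfm (hφm (hfim (hφim hst)))
  have hcommfi : ∀ y, f (f (fi y)) = fi (f (f y)) := by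
    intro y
    conv_rhs => rw [← hfr y]
    rw [hfl]
  have hcommv : ∀ y, f (f (v y)) = v (f (f y)) := by
    intro y
    simp only [hvdef]
    rw [← H, ← hcommfi, ← Hi]
  have hhinv : ∀ y, fi (fi (f (f y))) = y := fun y => by rw [hfl, hfl]
  have hcommφi2 : ∀ y, fi (fi (φi y)) = φi (fi (fi y)) := by
    intro y
    have h1 := Hi (fi (fi y))
    rw [hfr, hfr] at h1
    rw [h1, hfl, hfl]
  have hconj : ∀ y, f (v (fi y)) = vi y := by
    intro y
    simp only [hvdef, hvidef]
    rw [← hcommφi2, hfr]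
  have hvF : ∀ y, f (f y) = y → v y = y := by
    intro y h
    simp only [hvdef]
    rw [hfixfi y h, hfixf _ (hFφi y h), hφr]
  have hviF : ∀ y, f (f y) = y → vi y = y := by
    intro y h
    rw [← hvF y h, hvl, hvF y h]
  -- the fixed point set and the left endpoint α
  have hhc : Continuous (fun y => f (f y)) := hf2.continuous.comp hf2.continuous
  have hFclosed : IsClosed {y | f (f y) = y} := isClosed_eq hhc continuous_id
  set S : Set ℝ := {y | f (f y) = y} ∩ Iic x with hSdef
  have hSne : S.Nonempty := by
    obtain ⟨y, hy1, hy2⟩ := hex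
    exact ⟨y, hy2, le_of_lt hy1⟩
  have hSbdd : BddAbove S := ⟨x, fun y hy => hy.2⟩
  have hSclosed : IsClosed S := hFclosed.inter isClosed_Iic
  set α := sSup S with hαdef
  have hαS : α ∈ S := hSclosed.csSup_mem hSne hSbdd
  have hαF : f (f α) = α := hαS.1
  have hαx : α < x := hαS.2.lt_of_ne (fun h => hx (h ▸ hαF))
  have hfα : f α = α := hfixf α hαF
  have hvα : v α = α := hvF α hαF
  have hαmax : ∀ z, f (f z) = z → z ≤ x → z ≤ α := fun z h1 h2 => le_csSup hSbdd ⟨h1, h2⟩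
  -- endpoint-preservation facts needed for interval maps
  by_cases hFr : ({y | f (f y) = y} ∩ Ici x).Nonempty
  · -- bounded component
    set β := sInf ({y | f (f y) = y} ∩ Ici x) with hβdef
    have hβmem : β ∈ {y | f (f y) = y} ∩ Ici x :=
      (hFclosed.inter isClosed_Ici).csInf_mem hFr ⟨x, fun y hy => hy.2⟩
    have hβF : f (f β) = β := hβmem.1
    have hxβ : x < β := hβmem.2.lt_of_ne' (fun h => hx (h ▸ hβF))
    have hfβ : f β = β := hfixf β hβF
    have hfiβ : fi β = β := hfixfi β hβF
    have hvβ : v β = β := hvF β hβF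
    have hviβ : vi β = β := hviF β hβF
    have hfiα : fi α = α := hfixfi α hαF
    have hviα : vi α = α := hviF α hαF
    have hβmin : ∀ z, f (f z) = z → x ≤ z → β ≤ z := fun z h1 h2 =>
      csInf_le ⟨x, fun y hy => hy.2⟩ ⟨h1, h2⟩
    have key := interval_lemma f fi v vi hf2 hfi2 hv2 hvi2 hfm hvm hfl hfr hvl hvr
      hcommv hconj (Ioo α β) α
      (fun y hy => hy.1)
      (fun y hy z hz1 hz2 => ⟨hz1, lt_of_le_of_lt hz2 hy.2⟩)
      (fun y hy => ⟨by rw [← hfiα]; exact hfim hy.1, by rw [← hfiβ]; exact hfim hy.2⟩)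
      (fun y hy => ⟨by rw [← hviα]; exact hvim hy.1, by rw [← hviβ]; exact hvim hy.2⟩)
      (fun y hy hfix => by
        rcases le_total y x with h1 | h1
        · exact absurd (hαmax y hfix h1) (not_le.2 hy.1)
        · exact absurd (hβmin y hfix h1) (not_le.2 hy.2))
      hfα hvα
    exact key x ⟨hαx, hxβ⟩
  · -- unbounded component
    have hfiα : fi α = α := hfixfi α hαF
    have hviα : vi α = α := hviF α hαF
    have key := interval_lemma f fi v vi hf2 hfi2 hv2 hvi2 hfm hvm hfl hfr hvl hvr
      hcommv hconj (Ioi α) α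
      (fun y hy => hy)
      (fun _ _ z hz1 _ => hz1)
      (fun y hy => by rw [mem_Ioi, ← hfiα]; exact hfim hy)
      (fun y hy => by rw [mem_Ioi, ← hviα]; exact hvim hy)
      (fun y hy hfix => by
        rcases le_total y x with h1 | h1
        · exact absurd (hαmax y hfix h1) (not_le.2 hy)
        · exact hFr ⟨y, hfix, h1⟩)
      hfα hvα
    exact key x hαx

/-- An orientation-preserving `C²` diffeomorphism of the real line. -/
structure DiffTwoPlusR where
  toFun : ℝ → ℝ
  invFun : ℝ → ℝ
  left_inv : Function.LeftInverse invFun toFun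
  right_inv : Function.RightInverse invFun toFun
  contDiff : ContDiff ℝ 2 toFun
  contDiff_inv : ContDiff ℝ 2 invFun
  strictMono : StrictMono toFun

set_option maxHeartbeats 1000000 in
/-- If `ψ ∈ Diff²₊(ℝ)` has a fixed point, then its centralizer in `Diff²₊(ℝ)`
equals the centralizer of `ψ²`. -/
theorem centralizer_eq_centralizer_sq (ψ : DiffTwoPlusR)
    (hfix : ∃ x : ℝ, ψ.toFun x = x) :
    ∀ φ : DiffTwoPlusR,
      ((∀ x : ℝ, φ.toFun (ψ.toFun x) = ψ.toFun (φ.toFun x)) ↔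
       (∀ x : ℝ, φ.toFun (ψ.toFun (ψ.toFun x)) = ψ.toFun (ψ.toFun (φ.toFun x)))) := by
  intro φ
  constructor
  · intro h x
    rw [h, h]
  · intro H x
    set f := ψ.toFun with hfdef
    set fi := ψ.invFun with hfidef
    set g := φ.toFun with hgdef
    set gi := φ.invFun with hgidef
    have hf2 := ψ.contDiff
    have hfi2 := ψ.contDiff_inv
    have hg2 := φ.contDiff
    have hgi2 := φ.contDiff_inv
    have hfm := ψ.strictMono
    have hgm := φ.strictMono
    have hfl : ∀ t, fi (f t) = t := ψ.left_inv
    have hfr : ∀ t, f (fi t) = t := ψ.right_inv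
    have hgl : ∀ t, gi (g t) = t := φ.left_inv
    have hgr : ∀ t, g (gi t) = t := φ.right_inv
    have Hi : ∀ y, gi (f (f y)) = f (f (gi y)) := by
      intro y
      have h1 := H (gi y)
      rw [hgr] at h1
      rw [← h1, hgl]
    -- the key claim
    have key : ∀ z : ℝ, g (f (gi (fi z))) = z := by
      intro z
      by_cases hz : f (f z) = z
      · have h2 : f z = z := fix_sq hfm hz
        have h3 : fi z = z := by nth_rewrite 1 [← h2]; rw [hfl]
        have h4 : f (f (gi z)) = gi z := by rw [← Hi, hz]
        have h5 : f (gi z) = gi z := fix_sq hfm h4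
        rw [h3, h5, hgr]
      · obtain ⟨x₀, hx₀⟩ := hfix
        have hx₀2 : f (f x₀) = x₀ := by rw [hx₀, hx₀]
        rcases lt_trichotomy x₀ z with hlt | heq | hgt
        · exact core f fi g gi hf2 hfi2 hg2 hgi2 hfm hgm hfl hfr hgl hgr H z hz
            ⟨x₀, hlt, hx₀2⟩
        · exact absurd (heq ▸ hx₀2) hz
        · -- reflection
          have hR := core (fun t => -f (-t)) (fun t => -fi (-t)) (fun t => -g (-t))
            (fun t => -gi (-t))
            (contDiff_neg.comp (hf2.comp contDiff_neg))
            (contDiff_neg.comp (hfi2.comp contDiff_neg))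
            (contDiff_neg.comp (hg2.comp contDiff_neg))
            (contDiff_neg.comp (hgi2.comp contDiff_neg))
            (fun s t hst => by
              show -f (-s) < -f (-t)
              exact neg_lt_neg (hfm (neg_lt_neg hst)))
            (fun s t hst => by
              show -g (-s) < -g (-t)
              exact neg_lt_neg (hgm (neg_lt_neg hst)))
            (fun t => by show -fi (- -f (-t)) = t; rw [neg_neg, hfl, neg_neg])
            (fun t => by show -f (- -fi (-t)) = t; rw [neg_neg, hfr, neg_neg])
            (fun t => by show -gi (- -g (-t)) = t; rw [neg_neg, hgl, neg_neg])
            (fun t => by show -g (- -gi (-t)) = t; rw [neg_neg, hgr, neg_neg])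
            (fun t => by
              show -g (- -f (- -f (-t))) = -f (- -f (- -g (-t)))
              simp only [neg_neg]
              rw [H])
            (-z)
            (by
              show ¬ -f (- -f (- -z)) = -z
              simp only [neg_neg]
              intro hcon
              exact hz (by linarith [neg_injective hcon]))
            ⟨-x₀, neg_lt_neg hgt, by
              show -f (- -f (- -x₀)) = -x₀
              simp only [neg_neg]
              rw [hx₀2]⟩
          -- hR : -g (- -f (- -gi (- -fi (- -z)))) = -z  (after unfolding)
          have hR2 : -g (f (gi (fi z))) = -z := by
            have h6 : (fun t => -g (-t)) ((fun t => -f (-t)) ((fun t => -gi (-t))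
                ((fun t => -fi (-t)) (-z)))) = -g (f (gi (fi z))) := by
              simp only [neg_neg]
            rw [← h6]
            exact hR
          linarith [neg_injective hR2]
    -- conclude
    have h7 := key (f (g x))
    have h8 : fi (f (g x)) = g x := hfl _
    rw [h8, hgl] at h7
    exact h7
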